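/- arXiv:2212.11481 — 2 statements merged into one kernel-verified Lean document; each statement's English description precedes it below -/
import Mathlib

section
/- Let f be a C¹ function on (0,∞) and consider the loss L(P) = ∫ f(P(x)) dP_*(x) over absolutely continuous probability densities P on ℝ^d. If for every absolutely continuous target P_* the loss L is minimized (over absolutely continuous P) at P = P_*, then there exist constants c ≤ 0 and c' ∈ ℝ such that f(p) = c·log p + c' for all p > 0. -/
open MeasureTheory

/-- A probability density function on ℝ^d (with respect to Lebesgue measure). -/
def IsDensityFn (d : ℕ) (p : (Fin d → ℝ) → ℝ) : Prop :=
  Measurable p ∧ (∀ x, 0 ≤ p x) ∧ ∫ x, p x = 1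

noncomputable def ind01 : ℝ → ℝ := (Set.Ico (0:ℝ) 1).indicator (fun _ => 1)

noncomputable def stepf (s t u v : ℝ) : ℝ → ℝ := fun x =>
  (Set.Ico (0:ℝ) s).indicator (fun _ => u) x + (Set.Ico s (s+t)).indicator (fun _ => v) x

noncomputable def liftf (d : ℕ) (i0 : Fin d) (q : ℝ → ℝ) : (Fin d → ℝ) → ℝ :=
  fun x => ∏ i, (if i = i0 then q else ind01) (x i)

lemma ind01_mem (u : ℝ) : ind01 u = 0 ∨ ind01 u = 1 := by
  unfold ind01
  by_cases h : u ∈ Set.Ico (0:ℝ) 1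
  · right; simp [h]
  · left; simp [h]

lemma ind01_meas : Measurable ind01 :=
  (measurable_const.indicator measurableSet_Ico)

lemma ind01_nonneg (u : ℝ) : 0 ≤ ind01 u :=
  Set.indicator_nonneg (fun _ _ => zero_le_one) u

lemma ind01_integral : ∫ u, ind01 u = 1 := by
  unfold ind01
  rw [MeasureTheory.integral_indicator_const (1:ℝ) measurableSet_Ico]
  simp [Real.volume_Ico]

lemma liftf_meas (d : ℕ) (i0 : Fin d) (q : ℝ → ℝ) (hq : Measurable q) :
    Measurable (liftf d i0 q) := by
  apply Finset.measurable_prod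
  intro i _
  by_cases h : i = i0
  · simp only [h, ite_true]
    exact hq.comp (measurable_pi_apply i0)
  · simp only [h, ite_false]
    exact ind01_meas.comp (measurable_pi_apply i)

lemma liftf_nonneg (d : ℕ) (i0 : Fin d) (q : ℝ → ℝ) (hq : ∀ t, 0 ≤ q t) (x : Fin d → ℝ) :
    0 ≤ liftf d i0 q x := by
  apply Finset.prod_nonneg
  intro i _
  by_cases h : i = i0 <;> simp [h, hq, ind01_nonneg]

lemma liftf_integral (d : ℕ) (i0 : Fin d) (q : ℝ → ℝ) :
    ∫ x, liftf d i0 q x = ∫ t, q t := by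
  unfold liftf
  rw [MeasureTheory.volume_pi]
  rw [MeasureTheory.integral_fintype_prod_eq_prod (𝕜 := ℝ)
    (fun i => if i = i0 then q else ind01)]
  rw [Finset.prod_eq_single i0]
  · simp
  · intro b _ hb
    simp [hb, ind01_integral]
  · simp

lemma liftf_mul (d : ℕ) (i0 : Fin d) (f q qs : ℝ → ℝ) (h0 : f 0 * 0 = 0) (x : Fin d → ℝ) :
    f (liftf d i0 q x) * liftf d i0 qs x = liftf d i0 (fun t => f (q t) * qs t) x := by
  unfold liftf
  rw [← Finset.mul_prod_erase Finset.univ _ (Finset.mem_univ i0),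
      ← Finset.mul_prod_erase Finset.univ _ (Finset.mem_univ i0),
      ← Finset.mul_prod_erase Finset.univ _ (Finset.mem_univ i0)]
  simp only [if_pos rfl]
  have hcongr : ∀ g : ℝ → ℝ, ∏ i ∈ Finset.univ.erase i0, (if i = i0 then g else ind01) (x i)
      = ∏ i ∈ Finset.univ.erase i0, ind01 (x i) := by
    intro g
    apply Finset.prod_congr rfl
    intro i hi
    rw [if_neg (Finset.ne_of_mem_erase hi)]
  rw [hcongr, hcongr, hcongr]
  rcases Finset.prod_induction (fun i => ind01 (x i)) (fun r => r = 0 ∨ r = 1)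
    (by rintro a b (ha | ha) (hb | hb) <;> simp [ha, hb])
    (Or.inr rfl) (fun i _ => ind01_mem (x i)) with h | h
  · rw [h]; simp [h0]
  · rw [h]; simp

lemma stepf_meas (s t u v : ℝ) : Measurable (stepf s t u v) :=
  (measurable_const.indicator measurableSet_Ico).add
    (measurable_const.indicator measurableSet_Ico)

lemma stepf_nonneg (s t u v : ℝ) (hu : 0 ≤ u) (hv : 0 ≤ v) (x : ℝ) : 0 ≤ stepf s t u v x :=
  add_nonneg (Set.indicator_nonneg (fun _ _ => hu) x) (Set.indicator_nonneg (fun _ _ => hv) x)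

lemma integrable_ind (a b c : ℝ) :
    Integrable ((Set.Ico a b).indicator (fun _ => c)) := by
  rw [integrable_indicator_iff measurableSet_Ico]
  exact (integrableOn_const (by rw [Real.volume_Ico]; exact ENNReal.ofReal_ne_top))

lemma stepf_integral (s t u v : ℝ) (hs : 0 ≤ s) (ht : 0 ≤ t) :
    ∫ x, stepf s t u v x = u * s + v * t := by
  unfold stepf
  rw [integral_add (integrable_ind 0 s u) (integrable_ind s (s+t) v),
    MeasureTheory.integral_indicator_const u measurableSet_Ico,
    MeasureTheory.integral_indicator_const v measurableSet_Ico,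
    measureReal_def, measureReal_def, Real.volume_Ico, Real.volume_Ico]
  rw [ENNReal.toReal_ofReal (by linarith), ENNReal.toReal_ofReal (by linarith)]
  simp only [smul_eq_mul]
  ring

lemma stepf_comp (f : ℝ → ℝ) (s t u v u' v' : ℝ) (x : ℝ) :
    f (stepf s t u' v' x) * stepf s t u v x
    = (Set.Ico (0:ℝ) s).indicator (fun _ => f u' * u) x
      + (Set.Ico s (s+t)).indicator (fun _ => f v' * v) x := by
  unfold stepf
  by_cases h1 : x ∈ Set.Ico (0:ℝ) s
  · have h2 : x ∉ Set.Ico s (s+t) := fun h => absurd h1.2 (not_lt.mpr h.1)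
    simp [h1, h2]
  · by_cases h2 : x ∈ Set.Ico s (s+t)
    · simp [h1, h2]
    · simp [h1, h2]

lemma stepf_comp_integral (f : ℝ → ℝ) (s t u v u' v' : ℝ) (hs : 0 ≤ s) (ht : 0 ≤ t) :
    ∫ x, f (stepf s t u' v' x) * stepf s t u v x = f u' * u * s + f v' * v * t := by
  rw [show (fun x => f (stepf s t u' v' x) * stepf s t u v x)
      = fun x => (Set.Ico (0:ℝ) s).indicator (fun _ => f u' * u) x
        + (Set.Ico s (s+t)).indicator (fun _ => f v' * v) x from
    funext (stepf_comp f s t u v u' v')]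
  rw [integral_add (integrable_ind _ _ _) (integrable_ind _ _ _),
    MeasureTheory.integral_indicator_const _ measurableSet_Ico,
    MeasureTheory.integral_indicator_const _ measurableSet_Ico,
    measureReal_def, measureReal_def, Real.volume_Ico, Real.volume_Ico,
    ENNReal.toReal_ofReal (by linarith), ENNReal.toReal_ofReal (by linarith)]
  simp only [smul_eq_mul]
  ring

lemma key_ineq (d : ℕ) (hd : 0 < d) (f : ℝ → ℝ)
    (hmin : ∀ Pstar P : (Fin d → ℝ) → ℝ, IsDensityFn d Pstar → IsDensityFn d P →
      ∫ x, f (Pstar x) * Pstar x ≤ ∫ x, f (P x) * Pstar x)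
    (s t a b a' b' : ℝ) (hs : 0 < s) (ht : 0 < t) (ha : 0 ≤ a) (hb : 0 ≤ b)
    (ha' : 0 ≤ a') (hb' : 0 ≤ b') (h1 : a*s + b*t = 1) (h2 : a'*s + b'*t = 1) :
    f a * a * s + f b * b * t ≤ f a' * a * s + f b' * b * t := by
  set i0 : Fin d := ⟨0, hd⟩
  have hds : ∀ u v : ℝ, 0 ≤ u → 0 ≤ v → u*s+v*t = 1 →
      IsDensityFn d (liftf d i0 (stepf s t u v)) := by
    intro u v hu hv huv
    exact ⟨liftf_meas _ _ _ (stepf_meas s t u v),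
      liftf_nonneg _ _ _ (stepf_nonneg s t u v hu hv),
      by rw [liftf_integral, stepf_integral s t u v hs.le ht.le, huv]⟩
  have key := hmin _ _ (hds a b ha hb h1) (hds a' b' ha' hb' h2)
  have e1 : ∀ u v : ℝ, ∫ x, f (liftf d i0 (stepf s t u v) x) * liftf d i0 (stepf s t a b) x
      = f u * a * s + f v * b * t := by
    intro u v
    rw [show (fun x => f (liftf d i0 (stepf s t u v) x) * liftf d i0 (stepf s t a b) x)
        = liftf d i0 (fun w => f (stepf s t u v w) * stepf s t a b w) from
      funext (liftf_mul d i0 f _ _ (mul_zero _))]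
    rw [liftf_integral, stepf_comp_integral f s t a b u v hs.le ht.le]
  rw [e1 a b, e1 a' b'] at key
  exact key

/-- If the density-based loss L(P) = ∫ f(P(x)) dP_*(x) is minimized at P = P_* for every
absolutely continuous target P_*, then f(p) = c log p + c' with c ≤ 0. -/
theorem stmt_0 (d : ℕ) (hd : 0 < d) (f : ℝ → ℝ)
    (hf : ContDiffOn ℝ 1 f (Set.Ioi 0))
    (hmin : ∀ Pstar P : (Fin d → ℝ) → ℝ, IsDensityFn d Pstar → IsDensityFn d P →
      ∫ x, f (Pstar x) * Pstar x ≤ ∫ x, f (P x) * Pstar x) :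
    ∃ c c' : ℝ, c ≤ 0 ∧ ∀ p : ℝ, 0 < p → f p = c * Real.log p + c' := by
  have hdiff : ∀ p : ℝ, 0 < p → HasDerivAt f (deriv f p) p := fun p hp =>
    (((hf.differentiableOn one_ne_zero).differentiableAt (isOpen_Ioi.mem_nhds hp))).hasDerivAt
  -- step 1: p * f'(p) is constant
  have hconst : ∀ a b : ℝ, 0 < a → 0 < b → a * deriv f a = b * deriv f b := by
    intro a b ha hb
    set s := (2*a)⁻¹ with hsdef
    set t := (2*b)⁻¹ with htdef
    have hs : 0 < s := by positivity
    have ht : 0 < t := by positivity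
    set g : ℝ → ℝ := fun ε => f (a + 2*a*ε) * a * s + f (b - 2*b*ε) * b * t with hgdef
    have hmin0 : IsLocalMin g 0 := by
      have hnb : Set.Ioo (-(1/2):ℝ) (1/2) ∈ nhds (0:ℝ) :=
        Ioo_mem_nhds (by norm_num) (by norm_num)
      filter_upwards [hnb] with ε hε
      have ha' : 0 < a + 2*a*ε := by nlinarith [hε.1, hε.2]
      have hb' : 0 < b - 2*b*ε := by nlinarith [hε.1, hε.2]
      have h1 : a*s + b*t = 1 := by
        rw [hsdef, htdef]; field_simp; ring
      have h2 : (a+2*a*ε)*s + (b-2*b*ε)*t = 1 := by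
        rw [hsdef, htdef]; field_simp; ring
      have key := key_ineq d hd f hmin s t a b (a+2*a*ε) (b-2*b*ε) hs ht ha.le hb.le
        ha'.le hb'.le h1 h2
      have g0 : g 0 = f a * a * s + f b * b * t := by norm_num [hgdef]
      rw [g0]; exact key
    have hda : HasDerivAt (fun ε : ℝ => a + 2*a*ε) (2*a) 0 := by
      simpa using ((hasDerivAt_id (0:ℝ)).const_mul (2*a)).const_add a
    have hdb : HasDerivAt (fun ε : ℝ => b - 2*b*ε) (-(2*b)) 0 := by
      simpa using ((hasDerivAt_id (0:ℝ)).const_mul (2*b)).const_sub b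
    have hfa : HasDerivAt f (deriv f a) ((fun ε : ℝ => a + 2*a*ε) 0) := by
      show HasDerivAt f (deriv f a) (a + 2*a*0)
      rw [show a + 2*a*(0:ℝ) = a by ring]; exact hdiff a ha
    have hfb : HasDerivAt f (deriv f b) ((fun ε : ℝ => b - 2*b*ε) 0) := by
      show HasDerivAt f (deriv f b) (b - 2*b*0)
      rw [show b - 2*b*(0:ℝ) = b by ring]; exact hdiff b hb
    have hg1 : HasDerivAt (fun ε : ℝ => f (a + 2*a*ε) * a * s)
        (deriv f a * (2*a) * a * s) 0 := ((hfa.comp 0 hda).mul_const a).mul_const s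
    have hg2 : HasDerivAt (fun ε : ℝ => f (b - 2*b*ε) * b * t)
        (deriv f b * (-(2*b)) * b * t) 0 := ((hfb.comp 0 hdb).mul_const b).mul_const t
    have hgd : HasDerivAt g (deriv f a * (2*a) * a * s + deriv f b * (-(2*b)) * b * t) 0 :=
      hg1.add hg2
    have hzero : deriv f a * (2*a) * a * s + deriv f b * (-(2*b)) * b * t = 0 := by
      rw [← hgd.deriv]; exact hmin0.deriv_eq_zero
    rw [hsdef, htdef] at hzero
    field_simp at hzero
    have h4 : (4:ℝ)*(a*b) ≠ 0 := by positivity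
    apply mul_left_cancel₀ h4
    linear_combination (4*a*b) * hzero
  -- step 2: f p = c log p + f 1 on (0, ∞)
  set c := deriv f 1 with hc
  have hder0 : ∀ p : ℝ, 0 < p → HasDerivAt (fun q => f q - c * Real.log q) 0 p := by
    intro p hp
    have h1 : p * deriv f p = c := by simpa using hconst p 1 hp one_pos
    have hl := (Real.hasDerivAt_log hp.ne').const_mul c
    have hsub := (hdiff p hp).sub hl
    have : deriv f p - c * p⁻¹ = 0 := by
      field_simp
      linarith [h1]
    rwa [this] at hsub
  have hform : ∀ p : ℝ, 0 < p → f p = c * Real.log p + f 1 := by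
    intro p hp
    have := Convex.is_const_of_fderivWithin_eq_zero (𝕜 := ℝ) (convex_Ioi (0:ℝ))
      (f := fun q => f q - c * Real.log q)
      (fun q hq => ((hder0 q hq).differentiableAt).differentiableWithinAt)
      (fun q hq => by
        rw [fderivWithin_of_isOpen isOpen_Ioi hq, ((hder0 q hq).hasFDerivAt).fderiv]
        ext; simp)
      hp (Set.mem_Ioi.mpr one_pos)
    simp only [Real.log_one, mul_zero, sub_zero] at this
    linarith [this]
  -- step 3: c ≤ 0
  have L34 : Real.log (3/4 : ℝ) = Real.log 3 - 2*Real.log 2 := by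
    rw [Real.log_div (by norm_num) (by norm_num), show (4:ℝ) = 2^2 by norm_num,
      Real.log_pow]
    push_cast; ring
  have L14 : Real.log (1/4 : ℝ) = -(2*Real.log 2) := by
    rw [one_div, Real.log_inv, show (4:ℝ) = 2^2 by norm_num, Real.log_pow]
    push_cast; ring
  have L12 : Real.log (1/2 : ℝ) = -Real.log 2 := by
    rw [one_div, Real.log_inv]
  have hK := key_ineq d hd f hmin 1 1 (3/4) (1/4) (1/2) (1/2) one_pos one_pos
    (by norm_num) (by norm_num) (by norm_num) (by norm_num) (by norm_num) (by norm_num)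
  rw [hform (3/4) (by norm_num), hform (1/4) (by norm_num), hform (1/2) (by norm_num),
    L34, L14, L12] at hK
  have hKpos : 0 < 3 * Real.log 3 - 4 * Real.log 2 := by
    have h1 : Real.log 16 < Real.log 27 := Real.log_lt_log (by norm_num) (by norm_num)
    have h2 : Real.log 16 = 4 * Real.log 2 := by
      rw [show (16:ℝ) = 2^4 by norm_num, Real.log_pow]; push_cast; ring
    have h3 : Real.log 27 = 3 * Real.log 3 := by
      rw [show (27:ℝ) = 3^3 by norm_num, Real.log_pow]; push_cast; ring
    linarith
  have hcle : c ≤ 0 := by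
    by_contra hcp
    push_neg at hcp
    nlinarith [hK, hKpos, mul_pos hcp hKpos]
  exact ⟨c, f 1, hcle, hform⟩
end

section
/- (Stationary points of the 1-d Wasserstein dynamics are global minima or singular) Let ℙ be the uniform measure on [0,1] and P_* ∈ 𝒫_{2,ac}(ℝ). For G ∈ L²(ℙ, ℝ), let π be the (unique) optimal transport plan between G#ℙ and P_*, and let m(x) = ∫ x' dπ(x'|x). If G = m∘G (a stationary point of the dynamics dG_t/dt = m_t∘G_t − G_t) and G#ℙ is absolutely continuous, then G#ℙ = P_*. Consequently, any stationary point that is not a global minimizer of W₂²(G#ℙ, P_*) pushes forward ℙ to a singular measure, i.e., there exists x with (G#ℙ)({x}) > 0. -/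
open MeasureTheory

/-- A coupling of two measures on ℝ. -/
def IsCoupling (μ ν : Measure ℝ) (π : Measure (ℝ × ℝ)) : Prop :=
  π.map Prod.fst = μ ∧ π.map Prod.snd = ν

/-- Quadratic transport cost of a coupling. -/
noncomputable def cost2 (π : Measure (ℝ × ℝ)) : ℝ := ∫ p, (p.1 - p.2) ^ 2 ∂π

/-- An optimal transport plan for the quadratic cost. -/
def IsOptimalCoupling (μ ν : Measure ℝ) (π : Measure (ℝ × ℝ)) : Prop :=
  IsCoupling μ ν π ∧ ∀ π' : Measure (ℝ × ℝ), IsProbabilityMeasure π' → IsCoupling μ ν π' →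
    cost2 π ≤ cost2 π'

/-- `m` is the conditional mean x ↦ ∫ x' dπ(x'|x) of the second coordinate given the first. -/
def IsCondMean (π : Measure (ℝ × ℝ)) (m : ℝ → ℝ) : Prop :=
  Measurable m ∧ ∀ s : Set ℝ, MeasurableSet s →
    ∫ p in s ×ˢ (Set.univ : Set ℝ), p.2 ∂π = ∫ x in s, m x ∂(π.map Prod.fst)

/-- The uniform measure on [0,1]. -/
noncomputable def unif01 : Measure ℝ := volume.restrict (Set.Icc 0 1)




open MeasureTheory Set ProbabilityTheory Filter

noncomputable def qf (μ : Measure ℝ) (u : ℝ) : ℝ :=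
  if u ∈ Set.Ioo (0:ℝ) 1 then sInf {x | u ≤ cdf μ x} else 0

section quant
variable {μ : Measure ℝ} [IsProbabilityMeasure μ] {u v : ℝ}

lemma qf_set_nonempty (hu : u < 1) : {x | u ≤ cdf μ x}.Nonempty := by
  have h : ∀ᶠ x in atTop, u ≤ cdf μ x :=
    (tendsto_cdf_atTop μ).eventually_const_le hu
  obtain ⟨x, hx⟩ := h.exists
  exact ⟨x, hx⟩

lemma qf_set_bddBelow (hu : 0 < u) : BddBelow {x | u ≤ cdf μ x} := by
  have h : ∀ᶠ x in atBot, cdf μ x < u :=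
    (tendsto_cdf_atBot μ).eventually_lt_const hu
  obtain ⟨x₀, hx₀⟩ := (eventually_atBot.1 h)
  refine ⟨x₀, fun y hy => ?_⟩
  by_contra hxy
  exact absurd hy (not_le.2 (hx₀ y (le_of_not_ge hxy)))

lemma le_cdf_iff (hu : u ∈ Ioo (0:ℝ) 1) (x : ℝ) : u ≤ cdf μ x ↔ qf μ u ≤ x := by
  rw [qf, if_pos hu]
  constructor
  · intro hx
    exact csInf_le (qf_set_bddBelow hu.1) hx
  · intro hx
    have key : ∀ z, x < z → u ≤ cdf μ z := by
      intro z hz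
      have : sInf {x | u ≤ cdf μ x} < z := lt_of_le_of_lt hx hz
      obtain ⟨y, hy, hyz⟩ := (csInf_lt_iff (qf_set_bddBelow hu.1) (qf_set_nonempty hu.2)).1 this
      exact hy.trans (monotone_cdf μ hyz.le)
    have htd : Tendsto (cdf μ) (nhdsWithin x (Ioi x)) (nhds (cdf μ x)) :=
      ((cdf μ).right_continuous x).mono_left (nhdsWithin_mono x Ioi_subset_Ici_self)
    exact ge_of_tendsto htd (eventually_nhdsWithin_of_forall (fun z hz => key z hz))

lemma qf_measurable : Measurable (qf μ) := by
  apply measurable_of_Iic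
  intro t
  have : qf μ ⁻¹' Iic t =
      (Ioo (0:ℝ) 1 ∩ Iic (cdf μ t)) ∪ ((Ioo (0:ℝ) 1)ᶜ ∩ {u : ℝ | (0:ℝ) ≤ t}) := by
    ext u
    by_cases hu : u ∈ Ioo (0:ℝ) 1
    · simp only [mem_preimage, mem_Iic, mem_union, mem_inter_iff, hu, true_and, mem_compl_iff,
        not_true, false_and, or_false]
      exact ⟨fun h => (le_cdf_iff hu t).2 h, fun h => (le_cdf_iff hu t).1 h⟩
    · simp only [mem_preimage, mem_Iic, qf, if_neg hu, mem_union, mem_inter_iff, hu, false_and,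
        mem_compl_iff, not_false_iff, true_and, false_or, mem_setOf_eq, if_false]
  rw [this]
  refine (measurableSet_Ioo.inter measurableSet_Iic).union
    (measurableSet_Ioo.compl.inter ?_)
  by_cases h : (0:ℝ) ≤ t
  · simp only [h, setOf_true]; exact MeasurableSet.univ
  · simp only [h, setOf_false]; exact MeasurableSet.empty

lemma qf_monotoneOn : MonotoneOn (qf μ) (Ioo (0:ℝ) 1) := by
  intro u hu v hv huv
  have hv' : v ≤ cdf μ (qf μ v) := (le_cdf_iff hv _).2 le_rfl
  exact (le_cdf_iff hu _).1 (le_trans huv hv')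

lemma qf_map : Measure.map (qf μ) (volume.restrict (Ioo (0:ℝ) 1)) = μ := by
  have : IsFiniteMeasure (Measure.map (qf μ) (volume.restrict (Ioo (0:ℝ) 1))) := by
    constructor
    rw [Measure.map_apply qf_measurable MeasurableSet.univ]
    simp [Real.volume_Ioo]
  apply Measure.ext_of_Iic
  intro t
  rw [Measure.map_apply qf_measurable measurableSet_Iic,
    Measure.restrict_apply (qf_measurable measurableSet_Iic)]
  have hset : qf μ ⁻¹' Iic t ∩ Ioo (0:ℝ) 1 = Iic (cdf μ t) ∩ Ioo (0:ℝ) 1 := by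
    ext u
    simp only [mem_inter_iff, mem_preimage, mem_Iic, and_congr_left_iff]
    intro hu
    exact ⟨fun h => (le_cdf_iff hu t).2 h, fun h => (le_cdf_iff hu t).1 h⟩
  rw [hset, ← ofReal_cdf μ t]
  rcases lt_or_ge (cdf μ t) 1 with h1 | h1
  · have : Iic (cdf μ t) ∩ Ioo (0:ℝ) 1 = Ioc 0 (cdf μ t) := by
      ext u
      simp only [mem_inter_iff, mem_Iic, mem_Ioo, mem_Ioc]
      constructor
      · rintro ⟨h, h0, _⟩; exact ⟨h0, h⟩
      · rintro ⟨h0, h⟩; exact ⟨h, h0, lt_of_le_of_lt h h1⟩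
    rw [this, Real.volume_Ioc, sub_zero]
  · have h1' : cdf μ t = 1 := le_antisymm (cdf_le_one μ t) h1
    have : Iic (cdf μ t) ∩ Ioo (0:ℝ) 1 = Ioo (0:ℝ) 1 := by
      rw [h1']
      ext u
      simp only [mem_inter_iff, mem_Iic, mem_Ioo, and_iff_right_iff_imp]
      exact fun h => h.2.le
    rw [this, Real.volume_Ioo, h1']
    norm_num

lemma qf_strictMonoOn (hatom : ∀ x : ℝ, μ {x} = 0) (hu : u ∈ Ioo (0:ℝ) 1)
    (hv : v ∈ Ioo (0:ℝ) 1) (huv : u < v) : qf μ u < qf μ v := by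
  refine lt_of_le_of_ne (qf_monotoneOn hu hv huv.le) fun heq => ?_
  have hsub : Ioo u v ⊆ qf μ ⁻¹' {qf μ v} := by
    intro w hw
    have hw' : w ∈ Ioo (0:ℝ) 1 := ⟨lt_trans hu.1 hw.1, lt_trans hw.2 hv.2⟩
    have h1 : qf μ u ≤ qf μ w := qf_monotoneOn hu hw' hw.1.le
    have h2 : qf μ w ≤ qf μ v := qf_monotoneOn hw' hv hw.2.le
    have : qf μ w = qf μ v := le_antisymm h2 (heq ▸ h1)
    simpa using this
  have hμ : μ {qf μ v} = volume.restrict (Ioo (0:ℝ) 1) (qf μ ⁻¹' {qf μ v}) := by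
    have h0 := Measure.map_apply (μ := volume.restrict (Ioo (0:ℝ) 1)) (f := qf μ)
      qf_measurable (measurableSet_singleton (qf μ v))
    rw [qf_map] at h0
    exact h0
  have hge : volume.restrict (Ioo (0:ℝ) 1) (qf μ ⁻¹' {qf μ v}) ≥ volume (Ioo u v) := by
    rw [Measure.restrict_apply (qf_measurable (measurableSet_singleton _))]
    refine le_trans (measure_mono ?_) (le_refl _)
    intro w hw
    exact ⟨hsub hw, lt_trans hu.1 hw.1, lt_trans hw.2 hv.2⟩
  rw [hatom _] at hμ
  rw [← hμ, Real.volume_Ioo] at hge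
  simp only [ge_iff_le, nonpos_iff_eq_zero, ENNReal.ofReal_eq_zero] at hge
  linarith

end quant


-- product of two L² functions is integrable
lemma int_mul_of_sq {α : Type*} [MeasurableSpace α] {P : Measure α} {f g : α → ℝ}
    (hfm : AEStronglyMeasurable f P) (hgm : AEStronglyMeasurable g P)
    (hf2 : Integrable (fun x => f x ^ 2) P) (hg2 : Integrable (fun x => g x ^ 2) P) :
    Integrable (fun x => f x * g x) P := by
  refine Integrable.mono' (hf2.add hg2) (hfm.mul hgm) ?_
  filter_upwards with x
  have h1 : ‖f x * g x‖ = |f x * g x| := rfl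
  rw [h1, abs_mul]
  simp only [Pi.add_apply]
  nlinarith [abs_nonneg (f x), abs_nonneg (g x), sq_abs (f x), sq_abs (g x),
    sq_nonneg (|f x| - |g x|)]

-- L² implies L¹ on a finite measure (via 1 + x²)
lemma int_of_sq {α : Type*} [MeasurableSpace α] {P : Measure α} [IsFiniteMeasure P] {f : α → ℝ}
    (hfm : AEStronglyMeasurable f P) (hf2 : Integrable (fun x => f x ^ 2) P) :
    Integrable f P := by
  refine Integrable.mono' ((integrable_const (1:ℝ)).add hf2) hfm ?_
  filter_upwards with x
  have : ‖f x‖ = |f x| := rfl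
  rw [this]
  simp only [Pi.add_apply]
  nlinarith [abs_nonneg (f x), sq_abs (f x)]

-- integral over an upper subset of (0,1) equals integral over an interval
lemma upper_set_integral {h : ℝ → ℝ} (hint : IntegrableOn h (Ioo (0:ℝ) 1) volume)
    {U : Set ℝ} (hU : U ⊆ Ioo (0:ℝ) 1)
    (hupper : ∀ u ∈ U, ∀ v ∈ Ioo (0:ℝ) 1, u ≤ v → v ∈ U) :
    sInf (U ∪ {1}) ∈ Icc (0:ℝ) 1 ∧
    ∫ w in U, h w = ∫ w in Ioo (sInf (U ∪ {1})) 1, h w := by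
  set w0 := sInf (U ∪ {1}) with hw0
  have hbdd : BddBelow (U ∪ {1}) := by
    refine ⟨0, fun y hy => ?_⟩
    rcases hy with hy | hy
    · exact (hU hy).1.le
    · simp only [mem_singleton_iff] at hy; rw [hy]; norm_num
  have hne : (U ∪ {1}).Nonempty := ⟨1, Or.inr rfl⟩
  have hw01 : w0 ≤ 1 := csInf_le hbdd (Or.inr rfl)
  have hw00 : 0 ≤ w0 := by
    refine le_csInf hne fun y hy => ?_
    rcases hy with hy | hy
    · exact (hU hy).1.le
    · simp only [mem_singleton_iff] at hy; rw [hy]; norm_num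
  refine ⟨⟨hw00, hw01⟩, ?_⟩
  have hsub1 : U \ Ioo w0 1 ⊆ {w0} := by
    intro u hu
    have h1 : w0 ≤ u := csInf_le hbdd (Or.inl hu.1)
    have h2 : u < 1 := (hU hu.1).2
    rcases eq_or_lt_of_le h1 with he | hlt
    · simp [← he]
    · exact absurd ⟨hlt, h2⟩ hu.2
  have hsub2 : Ioo w0 1 \ U ⊆ (∅ : Set ℝ) := by
    intro u hu
    exfalso
    have h1 : w0 < u := hu.1.1
    obtain ⟨y, hy, hyu⟩ := (csInf_lt_iff hbdd hne).1 h1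
    rcases hy with hy | hy
    · exact hu.2 (hupper y hy u ⟨lt_of_le_of_lt hw00 h1, hu.1.2⟩ hyu.le)
    · simp only [mem_singleton_iff] at hy
      rw [hy] at hyu
      exact absurd hu.1.2 (not_lt.2 hyu.le)
  have hae : U =ᵐ[volume] Ioo w0 1 := by
    rw [Filter.eventuallyEq_set]
    have hnull : volume ({w0} : Set ℝ) = 0 := Real.volume_singleton
    have : ∀ᵐ x ∂(volume : Measure ℝ), x ∉ ({w0} : Set ℝ) := by
      rw [ae_iff]; simpa using hnull
    filter_upwards [this] with x hx
    constructor
    · intro hxU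
      by_contra hxI
      exact hx (hsub1 ⟨hxU, hxI⟩)
    · intro hxI
      by_contra hxU
      exact absurd (hsub2 ⟨hxI, hxU⟩) (notMem_empty x)
  exact setIntegral_congr_set hae

set_option maxHeartbeats 1000000 in
theorem key (μ ν : Measure ℝ) [IsProbabilityMeasure μ] [IsProbabilityMeasure ν]
    (hμ2 : Integrable (fun x => x ^ 2) μ) (hν2 : Integrable (fun x => x ^ 2) ν)
    (π : Measure (ℝ × ℝ)) [IsProbabilityMeasure π]
    (hc1 : π.map Prod.fst = μ) (hc2 : π.map Prod.snd = ν)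
    (hoptim : ∀ π' : Measure (ℝ × ℝ), IsProbabilityMeasure π' → π'.map Prod.fst = μ →
      π'.map Prod.snd = ν → ∫ p, (p.1 - p.2)^2 ∂π ≤ ∫ p, (p.1 - p.2)^2 ∂π')
    (hmart : ∀ s : Set ℝ, MeasurableSet s →
      ∫ p in s ×ˢ (univ : Set ℝ), p.2 ∂π = ∫ p in s ×ˢ (univ : Set ℝ), p.1 ∂π)
    (hatom : ∀ x : ℝ, μ {x} = 0) : μ = ν := by
  classical
  -- basic integrability under π
  have hsq1 : Integrable (fun p : ℝ × ℝ => p.1 ^ 2) π := by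
    have h := hμ2
    rw [← hc1] at h
    exact (integrable_map_measure ((measurable_id.pow_const 2).aestronglyMeasurable)
      measurable_fst.aemeasurable).1 h
  have hsq2 : Integrable (fun p : ℝ × ℝ => p.2 ^ 2) π := by
    have h := hν2
    rw [← hc2] at h
    exact (integrable_map_measure ((measurable_id.pow_const 2).aestronglyMeasurable)
      measurable_snd.aemeasurable).1 h
  have h1 : Integrable (fun p : ℝ × ℝ => p.1) π :=
    int_of_sq measurable_fst.aestronglyMeasurable hsq1
  have h2 : Integrable (fun p : ℝ × ℝ => p.2) π :=
    int_of_sq measurable_snd.aestronglyMeasurable hsq2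
  have hmul : Integrable (fun p : ℝ × ℝ => p.1 * p.2) π :=
    int_mul_of_sq measurable_fst.aestronglyMeasurable measurable_snd.aestronglyMeasurable hsq1 hsq2
  -- martingale: E[X (Y - X)] = 0
  have hsint : ∀ f : SimpleFunc ℝ ℝ, Integrable (fun p : ℝ × ℝ => f p.1 * (p.2 - p.1)) π := by
    intro f
    obtain ⟨C, hC⟩ := f.exists_forall_norm_le
    have hC0 : 0 ≤ C := le_trans (norm_nonneg _) (hC 0)
    refine Integrable.mono' ((h1.abs.add h2.abs).const_mul C)
      ((f.measurable.comp measurable_fst).mul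
        (measurable_snd.sub measurable_fst)).aestronglyMeasurable ?_
    filter_upwards with p
    rw [norm_mul]
    have hb : ‖p.2 - p.1‖ ≤ |p.1| + |p.2| := by
      rw [Real.norm_eq_abs]
      calc |p.2 - p.1| ≤ |p.2| + |p.1| := abs_sub _ _
        _ = |p.1| + |p.2| := by ring
    calc ‖f p.1‖ * ‖p.2 - p.1‖ ≤ C * (|p.1| + |p.2|) :=
          mul_le_mul (hC p.1) hb (norm_nonneg _) hC0
      _ = C * (|p.1| + |p.2|) := rfl
  have hsimp : ∀ f : SimpleFunc ℝ ℝ, ∫ p : ℝ × ℝ, f p.1 * (p.2 - p.1) ∂π = 0 := by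
    intro f
    induction f using SimpleFunc.induction with
    | const c hs =>
      rename_i s
      have hkey : (fun p : ℝ × ℝ =>
          (SimpleFunc.piecewise s hs (SimpleFunc.const ℝ c) (SimpleFunc.const ℝ 0)) p.1
            * (p.2 - p.1))
          = (s ×ˢ (univ : Set ℝ)).indicator (fun p : ℝ × ℝ => c * (p.2 - p.1)) := by
        funext p
        simp only [SimpleFunc.coe_piecewise, SimpleFunc.coe_const, Set.piecewise,
          Set.indicator_apply, Set.mem_prod, Set.mem_univ, and_true]
        by_cases hp : p.1 ∈ s <;> simp [hp]
      rw [hkey, integral_indicator (hs.prod MeasurableSet.univ), integral_const_mul]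
      have : ∫ p in s ×ˢ (univ : Set ℝ), (p.2 - p.1) ∂π = 0 := by
        rw [integral_sub h2.integrableOn h1.integrableOn, hmart s hs, sub_self]
      rw [this, mul_zero]
    | @add f g hdis hf hg =>
      have : (fun p : ℝ × ℝ => (f + g) p.1 * (p.2 - p.1))
          = fun p : ℝ × ℝ => f p.1 * (p.2 - p.1) + g p.1 * (p.2 - p.1) := by
        funext p
        simp only [SimpleFunc.coe_add, Pi.add_apply]
        ring
      rw [this, integral_add (hsint f) (hsint g), hf, hg, add_zero]
  have hXY : ∫ p : ℝ × ℝ, p.1 * (p.2 - p.1) ∂π = 0 := by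
    set φ := fun n => SimpleFunc.approxOn (fun x : ℝ => x) measurable_id univ 0 (mem_univ 0) n
      with hφdef
    have hlim : Tendsto (fun n => ∫ p : ℝ × ℝ, φ n p.1 * (p.2 - p.1) ∂π) atTop
        (nhds (∫ p : ℝ × ℝ, p.1 * (p.2 - p.1) ∂π)) := by
      refine tendsto_integral_of_dominated_convergence
        (fun p : ℝ × ℝ => 2 * p.1 ^ 2 + 2 * |p.1 * p.2|) ?_ ?_ ?_ ?_
      · intro n
        exact (((φ n).measurable.comp measurable_fst).mul
          (measurable_snd.sub measurable_fst)).aestronglyMeasurable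
      · exact (hsq1.const_mul 2).add ((hmul.abs).const_mul 2)
      · intro n
        filter_upwards with p
        rw [norm_mul]
        have hb1 : ‖φ n p.1‖ ≤ ‖p.1‖ + ‖p.1‖ :=
          SimpleFunc.norm_approxOn_zero_le measurable_id (mem_univ 0) p.1 n
        have hb : ‖p.2 - p.1‖ ≤ |p.1| + |p.2| := by
          rw [Real.norm_eq_abs]
          calc |p.2 - p.1| ≤ |p.2| + |p.1| := abs_sub _ _
            _ = |p.1| + |p.2| := by ring
        have hmm : ‖φ n p.1‖ * ‖p.2 - p.1‖ ≤ (‖p.1‖ + ‖p.1‖) * (|p.1| + |p.2|) :=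
          mul_le_mul hb1 hb (norm_nonneg _) (by positivity)
        refine le_trans hmm ?_
        rw [Real.norm_eq_abs, abs_mul]
        nlinarith [abs_nonneg p.1, abs_nonneg p.2, sq_abs p.1]
      · filter_upwards with p
        exact (SimpleFunc.tendsto_approxOn measurable_id (mem_univ 0)
          (by simp)).mul_const (p.2 - p.1)
    have hzero : (fun n => ∫ p : ℝ × ℝ, φ n p.1 * (p.2 - p.1) ∂π) = fun _ => (0:ℝ) := by
      funext n
      exact hsimp (φ n)
    rw [hzero] at hlim
    exact tendsto_nhds_unique hlim tendsto_const_nhds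
  -- means
  have hmean : ∫ p : ℝ × ℝ, p.2 ∂π = ∫ p : ℝ × ℝ, p.1 ∂π := by
    have := hmart univ MeasurableSet.univ
    simpa only [Set.univ_prod_univ, Measure.restrict_univ] using this
  -- cost identity
  have hcost : ∫ p : ℝ × ℝ, (p.1 - p.2)^2 ∂π
      = (∫ p : ℝ × ℝ, p.2^2 ∂π) - ∫ p : ℝ × ℝ, p.1^2 ∂π := by
    have hint : Integrable (fun p : ℝ × ℝ => p.1 * (p.2 - p.1)) π := by
      have he : (fun p : ℝ × ℝ => p.1 * (p.2 - p.1)) = fun p => p.1 * p.2 - p.1^2 := by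
        funext p; ring
      rw [he]; exact hmul.sub hsq1
    have hsub : Integrable (fun p : ℝ × ℝ => p.2^2 - p.1^2) π := by exact hsq2.sub hsq1
    have he : (fun p : ℝ × ℝ => (p.1 - p.2)^2)
        = fun p : ℝ × ℝ => (p.2^2 - p.1^2) - 2 * (p.1 * (p.2 - p.1)) := by
      funext p; ring
    rw [he, integral_sub hsub (hint.const_mul 2), integral_sub hsq2 hsq1,
      integral_const_mul, hXY, mul_zero, sub_zero]
  -- call inequalities
  have hcall : ∀ t : ℝ, ∫ x, max (x - t) 0 ∂μ ≤ ∫ x, max (x - t) 0 ∂ν := by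
    intro t
    have hAm : MeasurableSet ((Ioi t) ×ˢ (univ : Set ℝ)) := measurableSet_Ioi.prod .univ
    have hμside : ∫ x, max (x - t) 0 ∂μ = ∫ p in (Ioi t) ×ˢ (univ : Set ℝ), (p.1 - t) ∂π := by
      rw [← hc1, integral_map measurable_fst.aemeasurable
        (show AEStronglyMeasurable (fun x : ℝ => max (x - t) 0) (Measure.map Prod.fst π) from
          ((measurable_id.sub_const t).max measurable_const).aestronglyMeasurable),
        ← integral_indicator hAm]
      congr 1
      funext p
      simp only [Set.indicator_apply, Set.mem_prod, Set.mem_Ioi, Set.mem_univ, and_true]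
      by_cases hp : t < p.1
      · rw [if_pos hp]; exact max_eq_left (by linarith)
      · rw [if_neg hp]; exact max_eq_right (by push_neg at hp; linarith)
    have hmartA : ∫ p in (Ioi t) ×ˢ (univ : Set ℝ), (p.1 - t) ∂π
        = ∫ p in (Ioi t) ×ˢ (univ : Set ℝ), (p.2 - t) ∂π := by
      rw [integral_sub h1.integrableOn (integrable_const t).integrableOn,
        integral_sub h2.integrableOn (integrable_const t).integrableOn,
        hmart (Ioi t) measurableSet_Ioi]
    have hle : ∫ p in (Ioi t) ×ˢ (univ : Set ℝ), (p.2 - t) ∂π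
        ≤ ∫ p : ℝ × ℝ, max (p.2 - t) 0 ∂π := by
      rw [← integral_indicator hAm]
      refine integral_mono ((integrable_indicator_iff hAm).2
        ((h2.sub (integrable_const t)).integrableOn)) ((h2.sub (integrable_const t)).pos_part) ?_
      intro p
      by_cases hp : p ∈ (Ioi t) ×ˢ (univ : Set ℝ)
      · rw [Set.indicator_of_mem hp]; exact le_max_left _ _
      · rw [Set.indicator_of_notMem hp]; exact le_max_right _ _
    have hνside : ∫ p : ℝ × ℝ, max (p.2 - t) 0 ∂π = ∫ x, max (x - t) 0 ∂ν := by
      rw [← hc2, integral_map measurable_snd.aemeasurable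
        (show AEStronglyMeasurable (fun x : ℝ => max (x - t) 0) (Measure.map Prod.snd π) from
          ((measurable_id.sub_const t).max measurable_const).aestronglyMeasurable)]
    rw [hμside, hmartA, ← hνside]
    exact hle
  -- quantile setup
  have hx2m : Measurable (fun x : ℝ => x ^ 2) := by fun_prop
  have hxid : Measurable (fun x : ℝ => x) := measurable_id
  set q := qf μ with hqdef
  set r := qf ν with hrdef
  have hqm : Measurable q := qf_measurable
  have hrm : Measurable r := qf_measurable
  have hqmap : Measure.map q (volume.restrict (Ioo (0:ℝ) 1)) = μ := qf_map
  have hrmap : Measure.map r (volume.restrict (Ioo (0:ℝ) 1)) = ν := qf_map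
  haveI hPfin : IsProbabilityMeasure (volume.restrict (Ioo (0:ℝ) 1)) := by
    constructor
    simp [Real.volume_Ioo]
  -- transfers of integrals
  have htransμ : ∀ f : ℝ → ℝ, Measurable f →
      ∫ x, f x ∂μ = ∫ u in Ioo (0:ℝ) 1, f (q u) ∂volume := by
    intro f hf
    rw [← hqmap, integral_map hqm.aemeasurable hf.aestronglyMeasurable]
  have htransν : ∀ f : ℝ → ℝ, Measurable f →
      ∫ x, f x ∂ν = ∫ u in Ioo (0:ℝ) 1, f (r u) ∂volume := by
    intro f hf
    rw [← hrmap, integral_map hrm.aemeasurable hf.aestronglyMeasurable]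
  -- integrability of quantiles
  have hIq2 : IntegrableOn (fun u : ℝ => q u ^ 2) (Ioo (0:ℝ) 1) volume := by
    have h := hμ2
    rw [← hqmap] at h
    exact (integrable_map_measure hx2m.aestronglyMeasurable
      hqm.aemeasurable).1 h
  have hIr2 : IntegrableOn (fun u : ℝ => r u ^ 2) (Ioo (0:ℝ) 1) volume := by
    have h := hν2
    rw [← hrmap] at h
    exact (integrable_map_measure hx2m.aestronglyMeasurable
      hrm.aemeasurable).1 h
  have hIq : IntegrableOn q (Ioo (0:ℝ) 1) volume :=
    int_of_sq hqm.aestronglyMeasurable hIq2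
  have hIr : IntegrableOn r (Ioo (0:ℝ) 1) volume :=
    int_of_sq hrm.aestronglyMeasurable hIr2
  have hIqr : IntegrableOn (fun u : ℝ => q u * r u) (Ioo (0:ℝ) 1) volume :=
    int_mul_of_sq hqm.aestronglyMeasurable hrm.aestronglyMeasurable hIq2 hIr2
  -- the competitor coupling
  have hpairm : Measurable (fun u : ℝ => (q u, r u)) := hqm.prodMk hrm
  have hq2t : ∫ p : ℝ × ℝ, p.1^2 ∂π = ∫ u in Ioo (0:ℝ) 1, q u ^ 2 ∂volume := by
    have h : ∫ p : ℝ × ℝ, p.1^2 ∂π = ∫ x, x^2 ∂μ := by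
      rw [← hc1, integral_map measurable_fst.aemeasurable
        hx2m.aestronglyMeasurable]
    rw [h, htransμ _ hx2m]
  have hr2t : ∫ p : ℝ × ℝ, p.2^2 ∂π = ∫ u in Ioo (0:ℝ) 1, r u ^ 2 ∂volume := by
    have h : ∫ p : ℝ × ℝ, p.2^2 ∂π = ∫ x, x^2 ∂ν := by
      rw [← hc2, integral_map measurable_snd.aemeasurable
        hx2m.aestronglyMeasurable]
    rw [h, htransν _ hx2m]
  have hD : ∫ u in Ioo (0:ℝ) 1, q u * (r u - q u) ∂volume ≤ 0 := by
    haveI hπ'prob : IsProbabilityMeasure (Measure.map (fun u : ℝ => (q u, r u))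
        (volume.restrict (Ioo (0:ℝ) 1))) := Measure.isProbabilityMeasure_map hpairm.aemeasurable
    have hπ'1 : (Measure.map (fun u : ℝ => (q u, r u)) (volume.restrict (Ioo (0:ℝ) 1))).map
        Prod.fst = μ := by
      rw [Measure.map_map measurable_fst hpairm]
      exact hqmap
    have hπ'2 : (Measure.map (fun u : ℝ => (q u, r u)) (volume.restrict (Ioo (0:ℝ) 1))).map
        Prod.snd = ν := by
      rw [Measure.map_map measurable_snd hpairm]
      exact hrmap
    have hπ'cost : ∫ p : ℝ × ℝ, (p.1 - p.2)^2
        ∂(Measure.map (fun u : ℝ => (q u, r u)) (volume.restrict (Ioo (0:ℝ) 1)))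
        = ∫ u in Ioo (0:ℝ) 1, (q u - r u)^2 ∂volume := by
      rw [integral_map hpairm.aemeasurable (f := fun p : ℝ × ℝ => (p.1 - p.2)^2)
        (((measurable_fst.sub measurable_snd).pow_const 2).aestronglyMeasurable)]
    have hle := hoptim _ hπ'prob hπ'1 hπ'2
    rw [hcost, hπ'cost, hq2t, hr2t] at hle
    have hsubint : IntegrableOn (fun u : ℝ => q u^2 - 2*(q u * r u)) (Ioo (0:ℝ) 1) volume := by
      exact hIq2.sub (hIqr.const_mul 2)
    have hexp : ∫ u in Ioo (0:ℝ) 1, (q u - r u)^2 ∂volume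
        = ((∫ u in Ioo (0:ℝ) 1, q u^2 ∂volume) - 2*∫ u in Ioo (0:ℝ) 1, q u * r u ∂volume)
          + ∫ u in Ioo (0:ℝ) 1, r u^2 ∂volume := by
      have he : (fun u : ℝ => (q u - r u)^2)
          = fun u : ℝ => (q u^2 - 2*(q u * r u)) + r u^2 := by funext u; ring
      rw [he, integral_add hsubint hIr2, integral_sub hIq2 (hIqr.const_mul 2), integral_const_mul]
    have heD : ∫ u in Ioo (0:ℝ) 1, q u * (r u - q u) ∂volume
        = (∫ u in Ioo (0:ℝ) 1, q u * r u ∂volume) - ∫ u in Ioo (0:ℝ) 1, q u^2 ∂volume := by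
      have he : (fun u : ℝ => q u * (r u - q u)) = fun u : ℝ => q u * r u - q u^2 := by
        funext u; ring
      rw [he, integral_sub hIqr hIq2]
    rw [heD]
    rw [hexp] at hle
    linarith
  -- the function g = r - q and its partial integrals
  have hgm : Measurable (fun u : ℝ => r u - q u) := hrm.sub hqm
  have hgint : IntegrableOn (fun u : ℝ => r u - q u) (Ioo (0:ℝ) 1) volume := hIr.sub hIq
  -- Φ is nonnegative
  have hΦpos : ∀ u ∈ Ioo (0:ℝ) 1, 0 ≤ ∫ w in Ioo u 1, (r w - q w) ∂volume := by
    intro u hu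
    set t := r u with htdef
    have hIqu : IntegrableOn q (Ioo u 1) volume := hIq.mono_set (Ioo_subset_Ioo hu.1.le le_rfl)
    have hIru : IntegrableOn r (Ioo u 1) volume := hIr.mono_set (Ioo_subset_Ioo hu.1.le le_rfl)
    have hIqt : IntegrableOn (fun w : ℝ => q w - t) (Ioo u 1) volume :=
      hIqu.sub (integrableOn_const (by simp [Real.volume_Ioo]))
    have hIrt : IntegrableOn (fun w : ℝ => r w - t) (Ioo u 1) volume :=
      hIru.sub (integrableOn_const (by simp [Real.volume_Ioo]))
    have hIqt0 : IntegrableOn (fun w : ℝ => q w - t) (Ioo (0:ℝ) 1) volume :=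
      hIq.sub (integrableOn_const (by simp [Real.volume_Ioo]))
    have hmaxq : IntegrableOn (fun w : ℝ => max (q w - t) 0) (Ioo (0:ℝ) 1) volume :=
      hIqt0.pos_part
    -- step (i)
    have h1 : ∫ w in Ioo u 1, (q w - t) ∂volume
        ≤ ∫ w in Ioo (0:ℝ) 1, max (q w - t) 0 ∂volume := by
      calc ∫ w in Ioo u 1, (q w - t) ∂volume ≤ ∫ w in Ioo u 1, max (q w - t) 0 ∂volume := by
            refine setIntegral_mono_on hIqt hIqt.pos_part measurableSet_Ioo ?_
            intro w _
            exact le_max_left _ _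
        _ ≤ ∫ w in Ioo (0:ℝ) 1, max (q w - t) 0 ∂volume := by
            refine setIntegral_mono_set hmaxq ?_ ?_
            · filter_upwards with w
              exact le_max_right _ _
            · exact HasSubset.Subset.eventuallyLE (Ioo_subset_Ioo hu.1.le le_rfl)
    -- step (ii)
    have h2 : ∫ w in Ioo (0:ℝ) 1, max (q w - t) 0 ∂volume
        ≤ ∫ w in Ioo (0:ℝ) 1, max (r w - t) 0 ∂volume := by
      have e1 := htransμ (fun x => max (x - t) 0) ((measurable_id.sub_const t).max measurable_const)
      have e2 := htransν (fun x => max (x - t) 0) ((measurable_id.sub_const t).max measurable_const)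
      rw [← e1, ← e2]
      exact hcall t
    -- step (iii)
    have h3 : ∫ w in Ioo (0:ℝ) 1, max (r w - t) 0 ∂volume = ∫ w in Ioo u 1, (r w - t) ∂volume := by
      have hsplit : Ioo (0:ℝ) 1 = Ioo 0 u ∪ Ico u 1 := (Ioo_union_Ico_eq_Ioo hu.1 hu.2.le).symm
      have hmaxr0 : IntegrableOn (fun w : ℝ => max (r w - t) 0) (Ioo (0:ℝ) 1) volume :=
        (hIr.sub (integrableOn_const (by simp [Real.volume_Ioo]))).pos_part
      rw [hsplit, setIntegral_union (by
        refine Set.disjoint_left.2 fun w hw hw' => ?_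
        exact absurd hw'.1 (not_le.2 hw.2)) measurableSet_Ico
        (hmaxr0.mono_set (by rw [hsplit]; exact subset_union_left))
        (hmaxr0.mono_set (by rw [hsplit]; exact subset_union_right))]
      have hz : ∫ w in Ioo (0:ℝ) u, max (r w - t) 0 ∂volume = 0 := by
        rw [setIntegral_congr_fun measurableSet_Ioo (g := fun _ => (0:ℝ))]
        · exact integral_zero _ _
        · intro w hw
          have hw1 : w ∈ Ioo (0:ℝ) 1 := ⟨hw.1, hw.2.trans hu.2⟩
          have : r w ≤ t := qf_monotoneOn hw1 hu hw.2.le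
          exact max_eq_right (by linarith)
      have hmx : ∫ w in Ico u 1, max (r w - t) 0 ∂volume = ∫ w in Ico u 1, (r w - t) ∂volume := by
        refine setIntegral_congr_fun measurableSet_Ico ?_
        intro w hw
        have hle : t ≤ r w := by
          rcases eq_or_lt_of_le hw.1 with he | hlt
          · exact le_of_eq (by rw [htdef, he])
          · exact qf_monotoneOn hu ⟨lt_trans hu.1 hlt, hw.2⟩ hlt.le
        exact max_eq_left (by linarith)
      rw [hz, hmx, zero_add, integral_Ico_eq_integral_Ioo]
    -- combine
    have h4 : ∫ w in Ioo u 1, (q w - t) ∂volume ≤ ∫ w in Ioo u 1, (r w - t) ∂volume := by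
      calc ∫ w in Ioo u 1, (q w - t) ∂volume ≤ ∫ w in Ioo (0:ℝ) 1, max (q w - t) 0 ∂volume := h1
        _ ≤ ∫ w in Ioo (0:ℝ) 1, max (r w - t) 0 ∂volume := h2
        _ = ∫ w in Ioo u 1, (r w - t) ∂volume := h3
    have h5 : ∫ w in Ioo u 1, (r w - q w) ∂volume
        = (∫ w in Ioo u 1, (r w - t) ∂volume) - ∫ w in Ioo u 1, (q w - t) ∂volume := by
      rw [← integral_sub hIrt hIqt]
      refine setIntegral_congr_fun measurableSet_Ioo ?_
      intro w _
      ring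
    rw [h5]
    linarith
  -- Φ(0) = 0
  have hΦ0 : ∫ w in Ioo (0:ℝ) 1, (r w - q w) ∂volume = 0 := by
    have hqid : ∫ x, x ∂μ = ∫ u in Ioo (0:ℝ) 1, q u ∂volume := htransμ _ hxid
    have hrid : ∫ x, x ∂ν = ∫ u in Ioo (0:ℝ) 1, r u ∂volume := htransν _ hxid
    have hfst : ∫ p : ℝ × ℝ, p.1 ∂π = ∫ x, x ∂μ := by
      rw [← hc1, integral_map measurable_fst.aemeasurable hxid.aestronglyMeasurable]
    have hsnd : ∫ p : ℝ × ℝ, p.2 ∂π = ∫ x, x ∂ν := by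
      rw [← hc2, integral_map measurable_snd.aemeasurable hxid.aestronglyMeasurable]
    rw [integral_sub hIr hIq, ← hqid, ← hrid, ← hfst, ← hsnd, hmean, sub_self]
  -- Φ vanishes everywhere on (0,1)
  have hΦall : ∀ w ∈ Icc (0:ℝ) 1, 0 ≤ ∫ w' in Ioo w 1, (r w' - q w') ∂volume := by
    intro w hw
    rcases eq_or_lt_of_le hw.1 with h0 | h0
    · rw [← h0, hΦ0]
    · rcases eq_or_lt_of_le hw.2 with h1 | h1
      · rw [h1, Set.Ioo_self, Measure.restrict_empty, integral_zero_measure]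
      · exact hΦpos w ⟨h0, h1⟩
  have hΦzero : ∀ u₀ ∈ Ioo (0:ℝ) 1, ∫ w in Ioo u₀ 1, (r w - q w) ∂volume = 0 := by
    intro u₀ hu₀
    by_contra hne
    have hpos : 0 < ∫ w in Ioo u₀ 1, (r w - q w) ∂volume :=
      lt_of_le_of_ne (hΦpos u₀ hu₀) (Ne.symm hne)
    set Φ : ℝ → ℝ := fun u => ∫ w in Ioo u 1, (r w - q w) ∂volume with hΦdef
    set δ : ℝ := Φ u₀ / 2 with hδdef
    have hδpos : 0 < δ := half_pos hpos
    have habs : IntegrableOn (fun w : ℝ => |r w - q w|) (Ioo (0:ℝ) 1) volume := hgint.abs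
    -- find u₁ > u₀ with Φ ≥ δ on [u₀, u₁]
    obtain ⟨u₁, hu₁mem, hu₁gt, hu₁δ⟩ :
        ∃ u₁, u₁ ∈ Ioo (0:ℝ) 1 ∧ u₀ < u₁ ∧ ∀ u ∈ Icc u₀ u₁, δ ≤ Φ u := by
      set a : ℕ → ℝ := fun n => u₀ + (1 - u₀)/(n + 2) with hadef
      have ha_mem : ∀ n : ℕ, a n ∈ Ioo (0:ℝ) 1 ∧ u₀ < a n := by
        intro n
        have hpos2 : (0:ℝ) < (n:ℝ) + 2 := by positivity
        have h01 : 0 < (1 - u₀)/((n:ℝ) + 2) := div_pos (by linarith [hu₀.2]) hpos2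
        have h02 : (1 - u₀)/((n:ℝ) + 2) < 1 - u₀ :=
          div_lt_self (by linarith [hu₀.2]) (by linarith)
        simp only [hadef]
        refine ⟨⟨by nlinarith [hu₀.1], by nlinarith⟩, by nlinarith⟩
      have hseq : Tendsto (fun n : ℕ => ∫ w in Ioc u₀ (a n), |r w - q w| ∂volume)
          atTop (nhds 0) := by
        have heq : (fun n : ℕ => ∫ w in Ioc u₀ (a n), |r w - q w| ∂volume)
            = fun n : ℕ => ∫ w, (Ioc u₀ (a n)).indicator (fun w => |r w - q w|) w ∂volume := by
          funext n
          exact (integral_indicator measurableSet_Ioc).symm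
        rw [heq]
        have h0 : (nhds (0:ℝ)) = nhds (∫ w : ℝ, (0:ℝ) ∂volume) := by simp
        rw [h0]
        refine tendsto_integral_of_dominated_convergence
          ((Ioo (0:ℝ) 1).indicator (fun w => |r w - q w|)) ?_ ?_ ?_ ?_
        · intro n
          exact (hgm.abs.indicator measurableSet_Ioc).aestronglyMeasurable
        · rw [integrable_indicator_iff measurableSet_Ioo]
          exact habs
        · intro n
          filter_upwards with w
          by_cases hw : w ∈ Ioc u₀ (a n)
          · rw [Set.indicator_of_mem hw, Real.norm_eq_abs, abs_abs,
              Set.indicator_of_mem (show w ∈ Ioo (0:ℝ) 1 from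
                ⟨lt_trans hu₀.1 hw.1, lt_of_le_of_lt hw.2 (ha_mem n).1.2⟩)]
          · rw [Set.indicator_of_notMem hw, norm_zero]
            exact Set.indicator_nonneg (fun x _ => abs_nonneg _) w
        · filter_upwards with w
          refine Tendsto.congr' ?_ tendsto_const_nhds
          rw [EventuallyEq, eventually_atTop]
          rcases le_or_gt w u₀ with hw | hw
          · exact ⟨0, fun n _ =>
              (Set.indicator_of_notMem (s := Ioc u₀ (a n))
                (fun hc => absurd hc.1 (not_lt.2 hw)) _).symm⟩
          · have hlim : Tendsto a atTop (nhds u₀) := by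
              have h1 : Tendsto (fun n : ℕ => (n:ℝ) + 2) atTop atTop :=
                tendsto_atTop_add_const_right _ 2 tendsto_natCast_atTop_atTop
              have h2 : Tendsto (fun n : ℕ => (1 - u₀)/((n:ℝ) + 2)) atTop (nhds 0) :=
                Tendsto.div_atTop tendsto_const_nhds h1
              have h3 : Tendsto (fun n : ℕ => u₀ + (1 - u₀)/((n:ℝ) + 2)) atTop
                  (nhds (u₀ + 0)) := Tendsto.add tendsto_const_nhds h2
              rw [add_zero] at h3
              exact h3
            have hev : ∀ᶠ n in atTop, a n < w := hlim.eventually_lt_const hw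
            obtain ⟨N, hN⟩ := eventually_atTop.1 hev
            exact ⟨N, fun n hn =>
              (Set.indicator_of_notMem (s := Ioc u₀ (a n))
                (fun hc => absurd hc.2 (not_le.2 (hN n hn))) _).symm⟩
      obtain ⟨n, hn⟩ := (hseq.eventually_lt_const hδpos).exists
      refine ⟨a n, (ha_mem n).1, (ha_mem n).2, ?_⟩
      intro u hu'
      have humem : u ∈ Ioo (0:ℝ) 1 :=
        ⟨lt_of_lt_of_le hu₀.1 hu'.1, lt_of_le_of_lt hu'.2 (ha_mem n).1.2⟩
      have hIoc1 : IntegrableOn (fun w : ℝ => r w - q w) (Ioc u₀ u) volume :=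
        hgint.mono_set (fun w hw => ⟨lt_trans hu₀.1 hw.1, lt_of_le_of_lt hw.2 humem.2⟩)
      have hIoo1 : IntegrableOn (fun w : ℝ => r w - q w) (Ioo u 1) volume :=
        hgint.mono_set (Ioo_subset_Ioo humem.1.le le_rfl)
      have hΦeq : Φ u₀ = (∫ w in Ioc u₀ u, (r w - q w) ∂volume) + Φ u := by
        have husplit : Ioo u₀ 1 = Ioc u₀ u ∪ Ioo u 1 :=
          (Ioc_union_Ioo_eq_Ioo hu'.1 humem.2).symm
        rw [hΦdef]
        simp only
        rw [husplit, setIntegral_union ?_ measurableSet_Ioo hIoc1 hIoo1]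
        refine Set.disjoint_left.2 fun w hw hw' => ?_
        exact absurd hw'.1 (not_lt.2 hw.2)
      have hb1 : |∫ w in Ioc u₀ u, (r w - q w) ∂volume|
          ≤ ∫ w in Ioc u₀ u, |r w - q w| ∂volume := by
        simpa [Real.norm_eq_abs] using
          norm_integral_le_integral_norm (μ := volume.restrict (Ioc u₀ u))
            (fun w => r w - q w)
      have hb2 : ∫ w in Ioc u₀ u, |r w - q w| ∂volume
          ≤ ∫ w in Ioc u₀ (a n), |r w - q w| ∂volume := by
        refine setIntegral_mono_set
          (habs.mono_set (fun w hw =>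
            ⟨lt_trans hu₀.1 hw.1, lt_of_le_of_lt hw.2 (ha_mem n).1.2⟩)) ?_ ?_
        · filter_upwards with w
          exact abs_nonneg _
        · exact HasSubset.Subset.eventuallyLE (Ioc_subset_Ioc le_rfl hu'.2)
      have hab := abs_le.1 hb1
      linarith
    -- the Fubini contradiction
    set c : ℝ := q u₀ with hcdef
    set β : ℝ := q u₁ with hβdef
    have hcβ : c < β := qf_strictMonoOn hatom hu₀ hu₁mem hu₁gt
    set K : ℝ → ℝ → ℝ := fun u s =>
      (Ioc (min c (q u)) (max c (q u))).indicator (fun _ => (1:ℝ)) s *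
        ((if c ≤ q u then (1:ℝ) else -1) * (r u - q u)) with hKdef
    have hKm : AEStronglyMeasurable (Function.uncurry K)
        ((volume.restrict (Ioo (0:ℝ) 1)).prod volume) := by
      have he : Function.uncurry K = fun z : ℝ × ℝ =>
          (if z.2 ∈ Ioc (min c (q z.1)) (max c (q z.1)) then (1:ℝ) else 0) *
            ((if c ≤ q z.1 then (1:ℝ) else -1) * (r z.1 - q z.1)) := by
        funext z
        rw [Function.uncurry]
        simp only [hKdef, Set.indicator_apply]
      rw [he]
      refine Measurable.aestronglyMeasurable (Measurable.mul ?_ (Measurable.mul ?_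
        ((hrm.comp measurable_fst).sub (hqm.comp measurable_fst)))) 
      · refine Measurable.ite ?_ measurable_const measurable_const
        have : {z : ℝ × ℝ | z.2 ∈ Ioc (min c (q z.1)) (max c (q z.1))}
            = {z : ℝ × ℝ | min c (q z.1) < z.2} ∩ {z : ℝ × ℝ | z.2 ≤ max c (q z.1)} := by
          ext z
          simp [Set.mem_Ioc, Set.mem_setOf_eq]
        rw [this]
        exact (measurableSet_lt (measurable_const.min (hqm.comp measurable_fst)) measurable_snd).inter
          (measurableSet_le measurable_snd (measurable_const.max (hqm.comp measurable_fst)))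
      · refine Measurable.ite ?_ measurable_const measurable_const
        exact measurableSet_le measurable_const (hqm.comp measurable_fst)
    have hminmax : ∀ u : ℝ, (0:ℝ) ≤ max c (q u) - min c (q u) := by
      intro u
      have := min_le_max (a := c) (b := q u)
      linarith
    have hKslice : ∀ u : ℝ, ∫ s, K u s ∂volume = (q u - c) * (r u - q u) := by
      intro u
      rw [hKdef]
      simp only
      rw [integral_mul_const, integral_indicator_const _ measurableSet_Ioc, measureReal_def, Real.volume_Ioc,
        smul_eq_mul, mul_one, ENNReal.toReal_ofReal (hminmax u)]
      rcases le_total c (q u) with hcq | hcq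
      · rw [min_eq_left hcq, max_eq_right hcq, if_pos hcq]
        ring
      · rcases eq_or_lt_of_le hcq with hh | hh
        · rw [hh]
          simp
        · rw [min_eq_right hcq, max_eq_left hcq, if_neg (not_le.2 hh)]
          ring
    have hKsliceInt : ∀ u : ℝ, Integrable (K u) volume := by
      intro u
      rw [hKdef]
      simp only
      exact ((integrable_indicator_iff measurableSet_Ioc).2
        (integrableOn_const measure_Ioc_lt_top.ne)).mul_const _
    have hKnorm : ∀ u : ℝ, ∫ s, ‖K u s‖ ∂volume = |q u - c| * |r u - q u| := by
      intro u
      have he : (fun s => ‖K u s‖) = (Ioc (min c (q u)) (max c (q u))).indicator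
          (fun _ => |(if c ≤ q u then (1:ℝ) else -1) * (r u - q u)|) := by
        funext s
        rw [hKdef]
        simp only
        by_cases hs : s ∈ Ioc (min c (q u)) (max c (q u))
        · rw [Set.indicator_of_mem hs, Set.indicator_of_mem hs, one_mul, Real.norm_eq_abs]
        · rw [Set.indicator_of_notMem hs, Set.indicator_of_notMem hs, zero_mul, norm_zero]
      rw [he, integral_indicator_const _ measurableSet_Ioc, measureReal_def, Real.volume_Ioc, smul_eq_mul,
        ENNReal.toReal_ofReal (hminmax u), abs_mul]
      rcases le_total c (q u) with hcq | hcq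
      · rw [min_eq_left hcq, max_eq_right hcq, if_pos hcq, abs_one, one_mul,
          abs_of_nonneg (sub_nonneg.2 hcq)]
      · rw [min_eq_right hcq, max_eq_left hcq, abs_of_nonpos (sub_nonpos.2 hcq)]
        have : |if c ≤ q u then (1:ℝ) else -1| = 1 := by
          by_cases hh : c ≤ q u
          · rw [if_pos hh, abs_one]
          · rw [if_neg hh]
            simp
        rw [this, one_mul, neg_sub]
    have hqcsqInt : IntegrableOn (fun u : ℝ => (q u - c)^2) (Ioo (0:ℝ) 1) volume := by
      have he : (fun u : ℝ => (q u - c)^2)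
          = fun u : ℝ => (q u^2 - (2*c) * q u) + c^2 := by funext u; ring
      rw [he]
      exact (hIq2.sub (hIq.const_mul (2*c))).add (integrableOn_const (by simp [Real.volume_Ioo]))
    have hrqsqInt : IntegrableOn (fun u : ℝ => (r u - q u)^2) (Ioo (0:ℝ) 1) volume := by
      have he : (fun u : ℝ => (r u - q u)^2)
          = fun u : ℝ => (r u^2 - 2 * (q u * r u)) + q u^2 := by funext u; ring
      rw [he]
      exact (hIr2.sub (hIqr.const_mul 2)).add hIq2
    have hKint : Integrable (Function.uncurry K)
        ((volume.restrict (Ioo (0:ℝ) 1)).prod volume) := by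
      refine (integrable_prod_iff hKm).2 ⟨?_, ?_⟩
      · filter_upwards with u
        exact hKsliceInt u
      · simp only [Function.uncurry_apply_pair]
        have he : (fun u => ∫ s, ‖K u s‖ ∂volume) = fun u => |q u - c| * |r u - q u| :=
          funext hKnorm
        rw [he]
        have he2 : (fun u : ℝ => |q u - c| * |r u - q u|)
            = fun u : ℝ => |(q u - c) * (r u - q u)| := by
          funext u
          rw [abs_mul]
        rw [he2]
        refine Integrable.abs ?_
        exact int_mul_of_sq ((hqm.sub_const c).aestronglyMeasurable)
          ((hrm.sub hqm).aestronglyMeasurable) hqcsqInt hrqsqInt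
    -- the function Ψ
    have hΨint : Integrable (fun s : ℝ => ∫ u in Ioo (0:ℝ) 1, K u s ∂volume) volume := by
      have h := (hKint.swap).integral_prod_left
      refine h.congr ?_
      filter_upwards with s
      rfl
    have hΨval : ∀ s : ℝ, 0 ≤ (∫ u in Ioo (0:ℝ) 1, K u s ∂volume) ∧
        (s ∈ Ioc c β → δ ≤ ∫ u in Ioo (0:ℝ) 1, K u s ∂volume) := by
      intro s
      set U : Set ℝ := {u : ℝ | u ∈ Ioo (0:ℝ) 1 ∧ s ≤ q u} with hUdef
      have hUm : MeasurableSet U := by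
        have : U = Ioo (0:ℝ) 1 ∩ q ⁻¹' (Ici s) := by
          ext u
          simp [hUdef, Set.mem_setOf_eq, Set.mem_Ici, and_comm]
        rw [this]
        exact measurableSet_Ioo.inter (hqm measurableSet_Ici)
      have hUsub : U ⊆ Ioo (0:ℝ) 1 := fun u hu => hu.1
      have hUupper : ∀ u ∈ U, ∀ v ∈ Ioo (0:ℝ) 1, u ≤ v → v ∈ U := by
        intro u hu v hv huv
        exact ⟨hv, le_trans hu.2 (qf_monotoneOn hu.1 hv huv)⟩
      have hUint : IntegrableOn (fun u : ℝ => r u - q u) U volume := hgint.mono_set hUsub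
      have hΨeq : (∫ u in Ioo (0:ℝ) 1, K u s ∂volume) = ∫ u in U, (r u - q u) ∂volume := by
        rcases lt_or_ge c s with hcs | hsc
        · have hKe : EqOn (fun u => K u s) (U.indicator (fun u : ℝ => r u - q u))
              (Ioo (0:ℝ) 1) := by
            intro u hu
            simp only
            by_cases hqu : s ≤ q u
            · have hcu : c ≤ q u := le_trans hcs.le hqu
              rw [Set.indicator_of_mem (show u ∈ U from ⟨hu, hqu⟩), hKdef]
              simp only
              rw [if_pos hcu, min_eq_left hcu, max_eq_right hcu,
                Set.indicator_of_mem (show s ∈ Ioc c (q u) from ⟨hcs, hqu⟩), one_mul, one_mul]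
            · push_neg at hqu
              rw [Set.indicator_of_notMem (fun hc => absurd hc.2 (not_le.2 hqu)), hKdef]
              simp only
              have hsnot : s ∉ Ioc (min c (q u)) (max c (q u)) := by
                intro hc
                rcases le_total c (q u) with h' | h'
                · rw [max_eq_right h'] at hc
                  exact absurd hc.2 (not_le.2 hqu)
                · rw [max_eq_left h'] at hc
                  exact absurd hc.2 (not_le.2 hcs)
              rw [Set.indicator_of_notMem hsnot, zero_mul]
          rw [setIntegral_congr_fun measurableSet_Ioo hKe, setIntegral_indicator hUm,
            Set.inter_eq_self_of_subset_right hUsub]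
        · have hKe : EqOn (fun u => K u s)
              (fun u => U.indicator (fun u : ℝ => r u - q u) u - (r u - q u))
              (Ioo (0:ℝ) 1) := by
            intro u hu
            simp only
            by_cases hqu : s ≤ q u
            · rw [Set.indicator_of_mem (show u ∈ U from ⟨hu, hqu⟩), sub_self, hKdef]
              simp only
              have hsnot : s ∉ Ioc (min c (q u)) (max c (q u)) := by
                intro hc
                rcases le_total c (q u) with h' | h'
                · rw [min_eq_left h'] at hc
                  exact absurd hc.1 (not_lt.2 hsc)
                · rw [min_eq_right h'] at hc
                  exact absurd hc.1 (not_lt.2 hqu)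
              rw [Set.indicator_of_notMem hsnot, zero_mul]
            · push_neg at hqu
              rw [Set.indicator_of_notMem (fun hc => absurd hc.2 (not_le.2 hqu)), zero_sub,
                hKdef]
              simp only
              have hquc : q u < c := lt_of_lt_of_le hqu hsc
              rw [if_neg (not_le.2 hquc), min_eq_right hquc.le, max_eq_left hquc.le,
                Set.indicator_of_mem (show s ∈ Ioc (q u) c from ⟨hqu, hsc⟩), one_mul]
              ring
          rw [setIntegral_congr_fun measurableSet_Ioo hKe,
            integral_sub ((hgint.indicator hUm).mono_set (fun x hx => hx)) hgint]
          have h2 : ∫ u in Ioo (0:ℝ) 1, U.indicator (fun u : ℝ => r u - q u) u ∂volume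
              = ∫ u in U, (r u - q u) ∂volume := by
            rw [setIntegral_indicator hUm, Set.inter_eq_self_of_subset_right hUsub]
          rw [h2, hΦ0, sub_zero]
      obtain ⟨hw0, hval⟩ := upper_set_integral hgint hUsub hUupper
      constructor
      · rw [hΨeq, hval]
        exact hΦall _ hw0
      · intro hs
        rw [hΨeq, hval]
        apply hu₁δ
        constructor
        · refine le_csInf ⟨1, Or.inr rfl⟩ ?_
          intro b hb
          rcases hb with hb | hb
          · by_contra hlt
            push_neg at hlt
            have : q b ≤ c := qf_monotoneOn hb.1 hu₀ hlt.le
            have : s ≤ c := le_trans hb.2 this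
            exact absurd hs.1 (not_lt.2 this)
          · simp only [Set.mem_singleton_iff] at hb
            rw [hb]
            exact hu₀.2.le
        · by_contra hlt
          push_neg at hlt
          obtain ⟨z, hz1, hz2⟩ := exists_between (lt_min hlt hu₁mem.2)
          have hzU : z ∈ U := by
            refine ⟨⟨lt_trans hu₁mem.1 hz1, lt_of_lt_of_le hz2 (min_le_right _ _)⟩, ?_⟩
            refine le_trans hs.2 (qf_monotoneOn hu₁mem
              ⟨lt_trans hu₁mem.1 hz1, lt_of_lt_of_le hz2 (min_le_right _ _)⟩ hz1.le)
          have hbdd : u₀ ∈ lowerBounds (U ∪ {1}) := by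
            intro y hy
            rcases hy with hy | hy
            · exact le_of_not_gt fun hc => absurd hs.1 (not_lt.2 (le_trans hy.2
                (qf_monotoneOn hy.1 hu₀ hc.le)))
            · simp only [Set.mem_singleton_iff] at hy
              rw [hy]
              exact hu₀.2.le
          have := csInf_le ⟨u₀, hbdd⟩ (Or.inl hzU)
          exact absurd (lt_of_le_of_lt this (lt_of_lt_of_le hz2 (min_le_left _ _))) (lt_irrefl _)
    -- Fubini swap and contradiction
    have hswap : (∫ u in Ioo (0:ℝ) 1, (∫ s, K u s ∂volume) ∂volume)
        = ∫ s, (∫ u in Ioo (0:ℝ) 1, K u s ∂volume) ∂volume := integral_integral_swap hKint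
    have hLHS : ∫ u in Ioo (0:ℝ) 1, (∫ s, K u s ∂volume) ∂volume ≤ 0 := by
      have he : (fun u : ℝ => ∫ s, K u s ∂volume) = fun u : ℝ => (q u - c) * (r u - q u) :=
        funext hKslice
      rw [he]
      have hint1 : IntegrableOn (fun u : ℝ => q u * (r u - q u)) (Ioo (0:ℝ) 1) volume := by
        have he3 : (fun u : ℝ => q u * (r u - q u)) = fun u : ℝ => q u * r u - q u^2 := by
          funext u; ring
        rw [he3]
        exact hIqr.sub hIq2
      have he2 : (fun u : ℝ => (q u - c) * (r u - q u))
          = fun u : ℝ => q u * (r u - q u) - c * (r u - q u) := by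
        funext u; ring
      rw [he2, integral_sub hint1 (hgint.const_mul c), integral_const_mul, hΦ0, mul_zero,
        sub_zero]
      exact hD
    have hRHS : δ * (β - c) ≤ ∫ s, (∫ u in Ioo (0:ℝ) 1, K u s ∂volume) ∂volume := by
      have hsplit := (integral_add_compl (s := Ioc c β) measurableSet_Ioc hΨint).symm
      have hle1 : δ * (β - c) ≤ ∫ s in Ioc c β, (∫ u in Ioo (0:ℝ) 1, K u s ∂volume) ∂volume := by
        have h := setIntegral_ge_of_const_le (c := δ) measurableSet_Ioc measure_Ioc_lt_top.ne
          (fun s hs => (hΨval s).2 hs) hΨint.integrableOn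
        rw [measureReal_def, Real.volume_Ioc, ENNReal.toReal_ofReal (by linarith), smul_eq_mul,
          mul_comm (β - c) δ] at h
        exact h
      have hle2 : 0 ≤ ∫ s in (Ioc c β)ᶜ, (∫ u in Ioo (0:ℝ) 1, K u s ∂volume) ∂volume :=
        setIntegral_nonneg measurableSet_Ioc.compl (fun s _ => (hΨval s).1)
      linarith
    rw [hswap] at hLHS
    nlinarith
  -- extraction: r = q a.e. on (0,1)
  have hall : ∀ s : Set ℝ, MeasurableSet s →
      ∫ w in s, (r w - q w) ∂(volume.restrict (Ioo (0:ℝ) 1)) = 0 := by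
    have hgmP : Integrable (fun w : ℝ => r w - q w) (volume.restrict (Ioo (0:ℝ) 1)) := hgint
    have hfin1 : IsFiniteMeasure ((volume.restrict (Ioo (0:ℝ) 1)).withDensity
        (fun w => ENNReal.ofReal (r w - q w))) := by
      refine isFiniteMeasure_withDensity ?_
      refine ne_top_of_le_ne_top hgmP.2.ne (lintegral_mono fun w => ?_)
      exact Real.ofReal_le_enorm _
    have hfin2 : IsFiniteMeasure ((volume.restrict (Ioo (0:ℝ) 1)).withDensity
        (fun w => ENNReal.ofReal (-(r w - q w)))) := by
      refine isFiniteMeasure_withDensity ?_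
      refine ne_top_of_le_ne_top hgmP.neg.2.ne (lintegral_mono fun w => ?_)
      exact le_trans (Real.ofReal_le_enorm _) (by simp)
    have hsign : ∀ s : Set ℝ, MeasurableSet s →
        ∫ w in s, (r w - q w) ∂(volume.restrict (Ioo (0:ℝ) 1))
          = (((volume.restrict (Ioo (0:ℝ) 1)).withDensity
              (fun w => ENNReal.ofReal (r w - q w))) s).toReal
            - (((volume.restrict (Ioo (0:ℝ) 1)).withDensity
              (fun w => ENNReal.ofReal (-(r w - q w)))) s).toReal := by
      intro s hs
      rw [withDensity_apply _ hs, withDensity_apply _ hs]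
      exact integral_eq_lintegral_pos_part_sub_lintegral_neg_part (hgmP.restrict (s := s))
    have hIic : ∀ x : ℝ, ∫ w in Iic x, (r w - q w) ∂(volume.restrict (Ioo (0:ℝ) 1)) = 0 := by
      intro x
      rw [Measure.restrict_restrict measurableSet_Iic]
      rcases le_or_gt x 0 with hx | hx
      · have hempty : Iic x ∩ Ioo (0:ℝ) 1 = ∅ := by
          ext w
          simp only [Set.mem_inter_iff, Set.mem_Iic, Set.mem_Ioo, Set.mem_empty_iff_false,
            iff_false, not_and]
          intro h1 h2
          linarith
        rw [hempty]
        simp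
      · rcases lt_or_ge x 1 with hx1 | hx1
        · have hseteq : Iic x ∩ Ioo (0:ℝ) 1 = Ioc 0 x := by
            ext w
            simp only [Set.mem_inter_iff, Set.mem_Iic, Set.mem_Ioo, Set.mem_Ioc]
            constructor
            · rintro ⟨h1, h2, h3⟩; exact ⟨h2, h1⟩
            · rintro ⟨h1, h2⟩; exact ⟨h2, h1, lt_of_le_of_lt h2 hx1⟩
          rw [hseteq]
          have hsp : Ioo (0:ℝ) 1 = Ioc 0 x ∪ Ioo x 1 := (Ioc_union_Ioo_eq_Ioo hx.le hx1).symm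
          have hint1 : IntegrableOn (fun w : ℝ => r w - q w) (Ioc 0 x) volume :=
            hgint.mono_set (fun w hw => ⟨hw.1, lt_of_le_of_lt hw.2 hx1⟩)
          have hint2 : IntegrableOn (fun w : ℝ => r w - q w) (Ioo x 1) volume :=
            hgint.mono_set (Ioo_subset_Ioo hx.le le_rfl)
          have hdisj : Disjoint (Ioc (0:ℝ) x) (Ioo x 1) :=
            Set.disjoint_left.2 fun w hw hw' => absurd hw'.1 (not_lt.2 hw.2)
          have hu := setIntegral_union hdisj measurableSet_Ioo hint1 hint2
          rw [← hsp] at hu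
          rw [hΦ0] at hu
          have hz := hΦzero x ⟨hx, hx1⟩
          linarith
        · have hseteq : Iic x ∩ Ioo (0:ℝ) 1 = Ioo 0 1 :=
            Set.inter_eq_self_of_subset_right (fun w hw => le_trans hw.2.le hx1)
          rw [hseteq, hΦ0]
    have hmeq : (volume.restrict (Ioo (0:ℝ) 1)).withDensity
          (fun w => ENNReal.ofReal (r w - q w))
        = (volume.restrict (Ioo (0:ℝ) 1)).withDensity
          (fun w => ENNReal.ofReal (-(r w - q w))) := by
      refine Measure.ext_of_Iic _ _ ?_
      intro x
      have h0 := hIic x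
      rw [hsign _ measurableSet_Iic] at h0
      have h1 : ((((volume.restrict (Ioo (0:ℝ) 1)).withDensity
          (fun w => ENNReal.ofReal (r w - q w)))) (Iic x)).toReal
          = ((((volume.restrict (Ioo (0:ℝ) 1)).withDensity
          (fun w => ENNReal.ofReal (-(r w - q w))))) (Iic x)).toReal := by linarith
      exact (ENNReal.toReal_eq_toReal_iff' (measure_ne_top _ _) (measure_ne_top _ _)).1 h1
    intro s hs
    rw [hsign s hs, hmeq, sub_self]
  have hae : (fun w : ℝ => r w - q w) =ᵐ[volume.restrict (Ioo (0:ℝ) 1)] 0 := by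
    refine Integrable.ae_eq_zero_of_forall_setIntegral_eq_zero (hgint :
      Integrable (fun w : ℝ => r w - q w) (volume.restrict (Ioo (0:ℝ) 1))) ?_
    intro s hs _
    exact hall s hs
  have hqr : q =ᵐ[volume.restrict (Ioo (0:ℝ) 1)] r := by
    filter_upwards [hae] with w hw
    have hw0 : r w - q w = 0 := hw
    linarith
  rw [← hqmap, ← hrmap]
  exact Measure.map_congr hqr


/-- Stationary points of the 1-d Wasserstein dynamics: if G = m∘G ℙ-a.e. (so G is a
stationary point of dG_t/dt = m_t∘G_t − G_t) and G#ℙ is absolutely continuous, then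
G#ℙ = P_*; consequently a stationary point that is not a global minimizer pushes ℙ
forward to a measure with an atom. -/
theorem stmt_12
    (Pstar : Measure ℝ) [IsProbabilityMeasure Pstar] (hac : Pstar ≪ volume)
    (h2 : Integrable (fun x => x ^ 2) Pstar)
    (G : ℝ → ℝ) (hGmeas : Measurable G) (hG2 : MemLp G 2 unif01)
    (π : Measure (ℝ × ℝ)) [IsProbabilityMeasure π]
    (hopt : IsOptimalCoupling (unif01.map G) Pstar π)
    (m : ℝ → ℝ) (hm : IsCondMean π m)
    (hstat : ∀ᵐ z ∂unif01, m (G z) = G z) :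
    ((unif01.map G) ≪ volume → unif01.map G = Pstar) ∧
    (unif01.map G ≠ Pstar → ∃ x : ℝ, 0 < unif01.map G {x}) := by

  obtain ⟨⟨hc1, hc2⟩, hopt2⟩ := hopt
  have hx2m : Measurable (fun x : ℝ => x ^ 2) := by fun_prop
  have hxid : Measurable (fun x : ℝ => x) := measurable_id
  haveI : IsProbabilityMeasure unif01 := by
    constructor
    rw [unif01, Measure.restrict_apply_univ]
    simp [Real.volume_Icc]
  haveI hμprob : IsProbabilityMeasure (unif01.map G) :=
    Measure.isProbabilityMeasure_map hGmeas.aemeasurable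
  have hμ2 : Integrable (fun x : ℝ => x ^ 2) (unif01.map G) := by
    rw [integrable_map_measure hx2m.aestronglyMeasurable hGmeas.aemeasurable]
    exact (memLp_two_iff_integrable_sq hG2.aestronglyMeasurable).1 hG2
  have hmid : ∀ᵐ x ∂(unif01.map G), m x = x := by
    rw [ae_map_iff hGmeas.aemeasurable (show MeasurableSet {x : ℝ | m x = x} from
      measurableSet_eq_fun hm.1 measurable_id)]
    exact hstat
  have hmart : ∀ s : Set ℝ, MeasurableSet s →
      ∫ p in s ×ˢ (Set.univ : Set ℝ), p.2 ∂π = ∫ p in s ×ˢ (Set.univ : Set ℝ), p.1 ∂π := by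
    intro s hs
    have h1 := hm.2 s hs
    rw [hc1] at h1
    have h2 : ∫ x in s, m x ∂(unif01.map G) = ∫ x in s, x ∂(unif01.map G) :=
      integral_congr_ae ((ae_restrict_of_ae hmid).mono fun x hx => hx)
    have h3 : ∫ x in s, x ∂(unif01.map G) = ∫ p in s ×ˢ (Set.univ : Set ℝ), p.1 ∂π := by
      rw [← hc1, setIntegral_map hs hxid.aestronglyMeasurable measurable_fst.aemeasurable,
        ← Set.prod_univ]
    rw [h1, h2, h3]
  have hmain : (∀ x : ℝ, (unif01.map G) {x} = 0) → unif01.map G = Pstar := by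
    intro hatom
    exact key (unif01.map G) Pstar hμ2 h2 π hc1 hc2
      (fun π' hp ha hb => hopt2 π' hp ⟨ha, hb⟩) hmart hatom
  constructor
  · intro hac2
    exact hmain fun x => hac2 Real.volume_singleton
  · intro hne
    by_contra hno
    push_neg at hno
    exact hne (hmain fun x => nonpos_iff_eq_zero.1 (hno x))
end
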